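/- Let n, m be positive integers and let f : [0,1]^n → ℝ^m be a Lipschitz map (with respect to the Euclidean metrics). If the image f([0,1]^n) has positive n-dimensional Hausdorff measure, then there exists a subset K ⊆ [0,1]^n with positive n-dimensional Hausdorff measure such that f is biLipschitz on K. -/

import Mathlib

open MeasureTheory Metric Set Filter Module Topology
open scoped ENNReal NNReal

noncomputable section
set_option maxHeartbeats 4000000

/-- The closed unit cube `[0,1]^n` in `ℝ^n` with the Euclidean metric. -/
def unitCube (n : ℕ) : Set (EuclideanSpace ℝ (Fin n)) :=
  {x | ∀ i, x i ∈ Set.Icc (0:ℝ) 1}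

/-- Hausdorff `d`-content: the infimum over countable covers `{U i}` of `S`
of `∑ i, (diam (U i))^d`. -/
def hContent {X : Type*} [PseudoEMetricSpace X] (d : ℝ) (S : Set X) : ℝ≥0∞ :=
  ⨅ (U : ℕ → Set X) (_ : S ⊆ ⋃ i, U i), ∑' i, EMetric.diam (U i) ^ d

/-- `F` is biLipschitz with constant `L` on `S`. -/
def BiLipschitzWithOn {X Y : Type*} [PseudoMetricSpace X] [PseudoMetricSpace Y]
    (L : ℝ) (F : X → Y) (S : Set X) : Prop :=
  ∀ x ∈ S, ∀ y ∈ S, L⁻¹ * dist x y ≤ dist (F x) (F y) ∧ dist (F x) (F y) ≤ L * dist x y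

/-- `F` is biLipschitz on `S`: for some `L ≥ 1`,
`L⁻¹ · dist x y ≤ dist (F x) (F y) ≤ L · dist x y` on `S`. -/
def BiLipschitzOn {X Y : Type*} [PseudoMetricSpace X] [PseudoMetricSpace Y]
    (F : X → Y) (S : Set X) : Prop :=
  ∃ L : ℝ, 1 ≤ L ∧ BiLipschitzWithOn L F S



lemma euclid_coord_dist {m : ℕ} (u v : EuclideanSpace ℝ (Fin m)) (i : Fin m) :
    dist (u i) (v i) ≤ dist u v := by
  rw [EuclideanSpace.dist_eq]
  have h1 : dist (u i) (v i) = Real.sqrt (dist (u i) (v i) ^ 2) := by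
    rw [Real.sqrt_sq dist_nonneg]
  rw [h1]
  apply Real.sqrt_le_sqrt
  exact Finset.single_le_sum (f := fun j => dist (u j) (v j) ^ 2)
    (fun j _ => sq_nonneg _) (Finset.mem_univ i)

lemma exists_lipschitz_extension {n m : ℕ} {L : ℝ≥0}
    {f : EuclideanSpace ℝ (Fin n) → EuclideanSpace ℝ (Fin m)}
    (hf : LipschitzOnWith L f (unitCube n)) :
    ∃ (L' : ℝ≥0) (g : EuclideanSpace ℝ (Fin n) → EuclideanSpace ℝ (Fin m)),
      LipschitzWith L' g ∧ Set.EqOn f g (unitCube n) := by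
  have hcoord : ∀ i : Fin m, LipschitzOnWith L (fun x => f x i) (unitCube n) := by
    intro i
    rw [lipschitzOnWith_iff_dist_le_mul]
    intro x hx y hy
    exact le_trans (euclid_coord_dist (f x) (f y) i)
      ((lipschitzOnWith_iff_dist_le_mul.1 hf) x hx y hy)
  choose gi hgi hgieq using fun i => (hcoord i).extend_real
  refine ⟨NNReal.sqrt m * L, fun x => (WithLp.toLp 2 (fun i => gi i x) : EuclideanSpace ℝ (Fin m)), ?_, ?_⟩
  · apply LipschitzWith.of_dist_le_mul
    intro x y
    rw [EuclideanSpace.dist_eq]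
    have h1 : ∀ i : Fin m, dist (gi i x) (gi i y) ^ 2 ≤ (L * dist x y) ^ 2 := by
      intro i
      have := (hgi i).dist_le_mul x y
      have h0 : (0:ℝ) ≤ dist (gi i x) (gi i y) := dist_nonneg
      nlinarith
    calc Real.sqrt (∑ i, dist (gi i x) (gi i y) ^ 2)
        ≤ Real.sqrt (∑ _i : Fin m, (L * dist x y) ^ 2) :=
          Real.sqrt_le_sqrt (Finset.sum_le_sum fun i _ => h1 i)
      _ = Real.sqrt m * (L * dist x y) := by
          rw [Finset.sum_const, Finset.card_univ, Fintype.card_fin, nsmul_eq_mul,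
            Real.sqrt_mul (by positivity), Real.sqrt_sq (by positivity)]
      _ ≤ (NNReal.sqrt m * L : ℝ≥0) * dist x y := by
          push_cast [Real.coe_sqrt]
          rw [mul_assoc]
  · intro x hx
    ext i
    exact hgieq i hx

lemma hausdorff_eq_smul_volume (n : ℕ) :
    ∃ c : ℝ≥0, 0 < c ∧
      (μH[(n:ℝ)] : Measure (EuclideanSpace ℝ (Fin n))) = c • volume := by
  have h1 : (μH[(n:ℝ)] : Measure (EuclideanSpace ℝ (Fin n)))
      = μH[(finrank ℝ (EuclideanSpace ℝ (Fin n)) : ℝ)] := by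
    rw [finrank_euclideanSpace_fin]
  rw [h1]
  exact ⟨_, Measure.addHaarScalarFactor_pos_of_isAddHaarMeasure _ _,
    Measure.isAddLeftInvariant_eq_smul _ _⟩

lemma image_hausdorff_le {n m : ℕ} {L' : ℝ≥0}
    {g : EuclideanSpace ℝ (Fin n) → EuclideanSpace ℝ (Fin m)}
    (hg : LipschitzWith L' g) {c : ℝ≥0} (hc : (μH[(n:ℝ)] : Measure (EuclideanSpace ℝ (Fin n))) = c • volume)
    (X : Set (EuclideanSpace ℝ (Fin n))) :
    μH[(n:ℝ)] (g '' X) ≤ (L' : ℝ≥0∞) ^ (n:ℝ) * (c * volume X) := by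
  calc μH[(n:ℝ)] (g '' X) ≤ (L' : ℝ≥0∞) ^ (n:ℝ) * μH[(n:ℝ)] X :=
        hg.hausdorffMeasure_image_le (by positivity) X
    _ = (L' : ℝ≥0∞) ^ (n:ℝ) * (c * volume X) := by rw [hc]; rfl

lemma euclid_coord_abs {m : ℕ} (u : EuclideanSpace ℝ (Fin m)) (i : Fin m) :
    |u i| ≤ ‖u‖ := by
  rw [EuclideanSpace.norm_eq]
  have h1 : |u i| = Real.sqrt (u i ^ 2) := by rw [Real.sqrt_sq_eq_abs]
  rw [h1]
  apply Real.sqrt_le_sqrt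
  calc u i ^ 2 ≤ ∑ j, u j ^ 2 :=
        Finset.single_le_sum (f := fun j => u j ^ 2) (fun j _ => sq_nonneg _) (Finset.mem_univ i)
    _ = ∑ j, ‖u j‖ ^ 2 := by simp [Real.norm_eq_abs, sq_abs]

lemma euclid_norm_le {m : ℕ} {u : EuclideanSpace ℝ (Fin m)} {a : ℝ} (ha : 0 ≤ a)
    (h : ∀ i, |u i| ≤ a) : ‖u‖ ≤ a * Real.sqrt m := by
  rw [EuclideanSpace.norm_eq]
  have : ∀ i, ‖u i‖ ^ 2 ≤ a ^ 2 := by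
    intro i
    rw [Real.norm_eq_abs]
    exact pow_le_pow_left₀ (abs_nonneg _) (h i) 2
  calc Real.sqrt (∑ i, ‖u i‖ ^ 2) ≤ Real.sqrt (∑ _i : Fin m, a ^ 2) :=
        Real.sqrt_le_sqrt (Finset.sum_le_sum fun i _ => this i)
    _ = a * Real.sqrt m := by
        rw [Finset.sum_const, Finset.card_univ, Fintype.card_fin, nsmul_eq_mul,
          Real.sqrt_mul (by positivity), Real.sqrt_sq ha, mul_comm]

/-- Half-open grid cube of mesh `ρ` indexed by `z`. -/
def gridCube (n : ℕ) (ρ : ℝ) (z : Fin n → ℤ) : Set (EuclideanSpace ℝ (Fin n)) :=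
  {x | ∀ i, x i ∈ Set.Ico (ρ * z i) (ρ * (z i + 1))}

lemma mem_gridCube_floor {n : ℕ} {ρ : ℝ} (hρ : 0 < ρ) (x : EuclideanSpace ℝ (Fin n)) :
    x ∈ gridCube n ρ (fun i => ⌊x i / ρ⌋) := by
  intro i
  constructor
  · rw [mul_comm, ← le_div_iff₀ hρ]
    exact Int.floor_le _
  · rw [mul_comm, ← div_lt_iff₀ hρ]
    push_cast
    exact Int.lt_floor_add_one _

lemma gridCube_norm_sub {n : ℕ} {ρ : ℝ} (hρ : 0 < ρ) {z : Fin n → ℤ}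
    {x y : EuclideanSpace ℝ (Fin n)} (hx : x ∈ gridCube n ρ z) (hy : y ∈ gridCube n ρ z) :
    ‖x - y‖ ≤ ρ * Real.sqrt n := by
  apply euclid_norm_le hρ.le
  intro i
  have h1 := hx i
  have h2 := hy i
  simp only [Set.mem_Ico] at h1 h2
  have : (x - y) i = x i - y i := rfl
  rw [this, abs_le]
  constructor <;> nlinarith

lemma gridCube_measurable {n : ℕ} (ρ : ℝ) (z : Fin n → ℤ) :
    MeasurableSet (gridCube n ρ z) := by
  have : gridCube n ρ z = ⋂ i, (fun x : EuclideanSpace ℝ (Fin n) => x i) ⁻¹'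
      (Set.Ico (ρ * z i) (ρ * (z i + 1))) := by
    ext x; simp [gridCube, Set.mem_iInter]
  rw [this]
  exact MeasurableSet.iInter fun i =>
    (measurableSet_Ico).preimage ((continuous_apply i).measurable.comp
      (MeasurableEquiv.toLp 2 (Fin n → ℝ)).symm.measurable)

lemma gridCube_volume {n : ℕ} {ρ : ℝ} (hρ : 0 < ρ) (z : Fin n → ℤ) :
    volume (gridCube n ρ z) = ENNReal.ofReal ρ ^ n := by
  have heq : gridCube n ρ z = (MeasurableEquiv.toLp 2 (Fin n → ℝ)).symm ⁻¹'
      (Set.univ.pi fun i => Set.Ico (ρ * z i) (ρ * (z i + 1))) := by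
    ext x
    simp [gridCube, Set.mem_pi]
  rw [heq, (EuclideanSpace.volume_preserving_symm_measurableEquiv_toLp (Fin n)).measure_preimage
    ((MeasurableSet.univ_pi fun i => measurableSet_Ico).nullMeasurableSet)]
  rw [volume_pi_pi]
  have : ∀ i : Fin n, volume (Set.Ico (ρ * z i) (ρ * (z i + 1))) = ENNReal.ofReal ρ := by
    intro i
    rw [Real.volume_Ico]
    congr 1
    ring
  simp [this]

lemma gridCube_disjoint {n : ℕ} {ρ : ℝ} (hρ : 0 < ρ) :
    Pairwise (Function.onFun Disjoint (gridCube n ρ)) := by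
  intro z z' hzz
  rw [Function.onFun, Set.disjoint_left]
  intro x hx hx'
  apply hzz
  funext i
  have h1 := hx i
  have h2 := hx' i
  simp only [Set.mem_Ico] at h1 h2
  by_contra hne
  rcases lt_or_gt_of_ne hne with h | h
  · have : ((z i : ℝ) + 1) ≤ (z' i : ℝ) := by exact_mod_cast h
    nlinarith
  · have : ((z' i : ℝ) + 1) ≤ (z i : ℝ) := by exact_mod_cast h
    nlinarith

lemma core_open {n m : ℕ} (hn : 0 < n)
    (g : EuclideanSpace ℝ (Fin n) → EuclideanSpace ℝ (Fin m))
    (A : EuclideanSpace ℝ (Fin n) →L[ℝ] EuclideanSpace ℝ (Fin m))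
    (hA : ¬Function.Injective A) {M : ℝ} (hAM : ‖A‖ ≤ M)
    {δ : ℝ} (hδ0 : 0 < δ) (hδ1 : δ ≤ 1)
    {K : Set (EuclideanSpace ℝ (Fin n))} (hK : IsCompact K) (hKne : K.Nonempty)
    (happ : ∀ x ∈ K, ∀ y ∈ K, ‖g x - g y - A (x - y)‖ ≤ δ * ‖x - y‖)
    {U : Set (EuclideanSpace ℝ (Fin n))} (hUopen : IsOpen U) (hKU : K ⊆ U) :
    μH[(n:ℝ)] (g '' K)
      ≤ ENNReal.ofReal ((2*M*Real.sqrt n + 5)^(n-1) * (4*Real.sqrt n)^n * δ) * volume U := by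
  classical
  have hM : 0 ≤ M := le_trans (norm_nonneg A) hAM
  have hsn : (0:ℝ) ≤ Real.sqrt n := Real.sqrt_nonneg n
  obtain ⟨r, hr0, hrU⟩ := hK.exists_cthickening_subset_open hUopen hKU
  obtain ⟨R, hR⟩ := hK.isBounded.subset_closedBall 0
  -- the range of A and its dimension
  set V : Submodule ℝ (EuclideanSpace ℝ (Fin m)) :=
    LinearMap.range (A : EuclideanSpace ℝ (Fin n) →ₗ[ℝ] EuclideanSpace ℝ (Fin m)) with hVdef
  set k := finrank ℝ V with hkdef
  have hkn : k < n := by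
    have hrank := LinearMap.finrank_range_add_finrank_ker
      (A : EuclideanSpace ℝ (Fin n) →ₗ[ℝ] EuclideanSpace ℝ (Fin m))
    rw [finrank_euclideanSpace_fin] at hrank
    have hker : LinearMap.ker (A : EuclideanSpace ℝ (Fin n) →ₗ[ℝ] EuclideanSpace ℝ (Fin m)) ≠ ⊥ := by
      intro h
      exact hA (by rw [← ContinuousLinearMap.coe_coe A]; exact LinearMap.ker_eq_bot.1 h)
    have hkerpos : 0 < finrank ℝ
        (LinearMap.ker (A : EuclideanSpace ℝ (Fin n) →ₗ[ℝ] EuclideanSpace ℝ (Fin m))) := by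
      rcases Nat.eq_zero_or_pos (finrank ℝ
        (LinearMap.ker (A : EuclideanSpace ℝ (Fin n) →ₗ[ℝ] EuclideanSpace ℝ (Fin m)))) with h | h
      · exact absurd (Submodule.finrank_eq_zero.mp h) hker
      · exact h
    rw [← hVdef, ← hkdef] at hrank
    omega
  set eV : V ≃ₗᵢ[ℝ] EuclideanSpace ℝ (Fin k) := (stdOrthonormalBasis ℝ V).repr with heV
  set N : ℕ := ⌈M * Real.sqrt n / δ⌉₊ + 1 with hN
  -- choice of a point in each cube
  set pt : ℝ → (Fin n → ℤ) → EuclideanSpace ℝ (Fin n) := fun ρ z =>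
    if h : (gridCube n ρ z ∩ K).Nonempty then h.some else hKne.some with hptdef
  have hpt : ∀ ρ z, (gridCube n ρ z ∩ K).Nonempty → pt ρ z ∈ gridCube n ρ z ∩ K := by
    intro ρ z h
    simp only [hptdef, dif_pos h]
    exact h.some_mem
  set ctr : ℝ → (Fin n → ℤ) × (Fin k → ℤ) → EuclideanSpace ℝ (Fin m) := fun ρ p =>
    g (pt ρ p.1) + (eV.symm (WithLp.toLp 2 (fun i => δ * ρ * (p.2 i))) : EuclideanSpace ℝ (Fin m)) with hctr
  set t : ℝ → (Fin n → ℤ) × (Fin k → ℤ) → Set (EuclideanSpace ℝ (Fin m)) := fun ρ p =>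
    if (gridCube n ρ p.1 ∩ K).Nonempty ∧ (∀ i, |p.2 i| ≤ (N:ℤ)) then
      Metric.closedBall (ctr ρ p) (2 * δ * ρ * Real.sqrt n) else ∅ with ht
  have hdiam : ∀ ρ : ℝ, 0 < ρ → ∀ p, EMetric.diam (t ρ p) ≤ ENNReal.ofReal (4*δ*ρ*Real.sqrt n) := by
    intro ρ hρ p
    by_cases hc : (gridCube n ρ p.1 ∩ K).Nonempty ∧ (∀ i, |p.2 i| ≤ (N:ℤ))
    · simp only [ht, if_pos hc]
      apply Metric.ediam_le_of_forall_dist_le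
      intro x hx y hy
      calc dist x y ≤ dist x (ctr ρ p) + dist y (ctr ρ p) := dist_triangle_right _ _ _
        _ ≤ (2*δ*ρ*Real.sqrt n) + (2*δ*ρ*Real.sqrt n) :=
            add_le_add (Metric.mem_closedBall.1 hx) (Metric.mem_closedBall.1 hy)
        _ = 4*δ*ρ*Real.sqrt n := by ring
    · simp only [ht, if_neg hc, EMetric.diam, EMetric.diam_empty]
      exact zero_le
  have hcover : ∀ ρ : ℝ, 0 < ρ → g '' K ⊆ ⋃ p, t ρ p := by
    intro ρ hρ
    rintro y ⟨x, hxK, rfl⟩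
    set z : Fin n → ℤ := fun i => ⌊x i / ρ⌋ with hz
    have hxz : x ∈ gridCube n ρ z := mem_gridCube_floor hρ x
    have hne : (gridCube n ρ z ∩ K).Nonempty := ⟨x, hxz, hxK⟩
    have hptm := hpt ρ z hne
    have hdist : ‖x - pt ρ z‖ ≤ ρ * Real.sqrt n := gridCube_norm_sub hρ hxz hptm.1
    set vV : V := ⟨A (x - pt ρ z), LinearMap.mem_range_self _ _⟩ with hvV
    have hvnorm : ‖vV‖ ≤ M * (ρ * Real.sqrt n) := by
      rw [Submodule.coe_norm]
      calc ‖A (x - pt ρ z)‖ ≤ ‖A‖ * ‖x - pt ρ z‖ := A.le_opNorm _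
        _ ≤ M * (ρ * Real.sqrt n) := by
            apply mul_le_mul hAM hdist (norm_nonneg _) hM
    set y' := eV vV with hy'
    have hy'c : ∀ i, |y' i| ≤ M * (ρ * Real.sqrt n) := by
      intro i
      exact le_trans (euclid_coord_abs y' i) (by rw [hy', LinearIsometryEquiv.norm_map]; exact hvnorm)
    set w : Fin k → ℤ := fun i => ⌊y' i / (δ * ρ)⌋ with hw
    have hδρ : 0 < δ * ρ := mul_pos hδ0 hρ
    have hwN : ∀ i, |w i| ≤ (N:ℤ) := by
      intro i
      have hb : |y' i / (δ * ρ)| ≤ M * Real.sqrt n / δ := by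
        rw [abs_div, abs_of_pos hδρ]
        rw [div_le_div_iff₀ hδρ hδ0]
        calc |y' i| * δ ≤ (M * (ρ * Real.sqrt n)) * δ :=
              mul_le_mul_of_nonneg_right (hy'c i) hδ0.le
          _ = M * Real.sqrt n * (δ * ρ) := by ring
      rw [abs_le] at hb ⊢
      constructor
      · rw [hw]
        simp only []
        rw [Int.le_floor]
        calc ((-(N:ℤ) : ℤ) : ℝ) = -(N:ℝ) := by push_cast; ring
          _ ≤ -(M * Real.sqrt n / δ) := by
              apply neg_le_neg
              calc M * Real.sqrt n / δ ≤ (⌈M * Real.sqrt n / δ⌉₊ : ℝ) := Nat.le_ceil _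
                _ ≤ (N:ℝ) := by rw [hN]; push_cast; linarith
          _ ≤ y' i / (δ * ρ) := hb.1
      · have h1 : (w i : ℝ) ≤ y' i / (δ * ρ) := Int.floor_le _
        have h2 : (w i : ℝ) ≤ (N : ℝ) := by
          apply le_trans h1
          calc y' i / (δ * ρ) ≤ M * Real.sqrt n / δ := hb.2
            _ ≤ (⌈M * Real.sqrt n / δ⌉₊ : ℝ) := Nat.le_ceil _
            _ ≤ (N:ℝ) := by rw [hN]; push_cast; linarith
        exact_mod_cast h2
    have hwnet : ∀ i, |y' i - δ * ρ * (w i)| ≤ δ * ρ := by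
      intro i
      have h1 : (w i : ℝ) ≤ y' i / (δ * ρ) := Int.floor_le _
      have h2 : y' i / (δ * ρ) < (w i : ℝ) + 1 := Int.lt_floor_add_one _
      have h1' : (w i : ℝ) * (δ * ρ) ≤ y' i := (le_div_iff₀ hδρ).1 h1
      have h2' : y' i < ((w i : ℝ) + 1) * (δ * ρ) := (div_lt_iff₀ hδρ).1 h2
      rw [abs_le]
      constructor <;> nlinarith
    set pV : V := eV.symm (WithLp.toLp 2 (fun i => δ * ρ * (w i))) with hpV
    have hvp : ‖vV - pV‖ ≤ δ * ρ * Real.sqrt k := by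
      have heq : eV (vV - pV) = (WithLp.toLp 2 (fun i => y' i - δ * ρ * (w i)) : EuclideanSpace ℝ (Fin k)) := by
        rw [map_sub, hpV, LinearIsometryEquiv.apply_symm_apply]
        rfl
      calc ‖vV - pV‖ = ‖eV (vV - pV)‖ := (LinearIsometryEquiv.norm_map _ _).symm
        _ ≤ (δ * ρ) * Real.sqrt k := by
            rw [heq]
            exact euclid_norm_le hδρ.le (fun i => hwnet i)
        _ = δ * ρ * Real.sqrt k := by ring
    apply Set.mem_iUnion.2 ⟨(z, w), ?_⟩
    have hcond : (gridCube n ρ z ∩ K).Nonempty ∧ (∀ i, |w i| ≤ (N:ℤ)) := ⟨hne, hwN⟩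
    simp only [ht, if_pos hcond]
    rw [Metric.mem_closedBall]
    have hveq : (vV : EuclideanSpace ℝ (Fin m)) = A (x - pt ρ z) := rfl
    have hdgx : g x - ctr ρ (z, w) = (g x - g (pt ρ z) - A (x - pt ρ z))
        + ((vV : EuclideanSpace ℝ (Fin m)) - (pV : EuclideanSpace ℝ (Fin m))) := by
      rw [hveq, hctr, hpV]
      dsimp only
      abel
    have hks : Real.sqrt k ≤ Real.sqrt n := Real.sqrt_le_sqrt (by exact_mod_cast hkn.le)
    calc dist (g x) (ctr ρ (z, w)) = ‖(g x - g (pt ρ z) - A (x - pt ρ z))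
        + ((vV : EuclideanSpace ℝ (Fin m)) - (pV : EuclideanSpace ℝ (Fin m)))‖ := by
          rw [dist_eq_norm, hdgx]
      _ ≤ ‖g x - g (pt ρ z) - A (x - pt ρ z)‖
          + ‖(vV : EuclideanSpace ℝ (Fin m)) - (pV : EuclideanSpace ℝ (Fin m))‖ := norm_add_le _ _
      _ ≤ δ * (ρ * Real.sqrt n) + δ * ρ * Real.sqrt k := by
          apply add_le_add
          · exact le_trans (happ x hxK _ hptm.2) (mul_le_mul_of_nonneg_left hdist hδ0.le)
          · rw [← Submodule.coe_sub, ← Submodule.coe_norm]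
            exact hvp
      _ ≤ 2 * δ * ρ * Real.sqrt n := by nlinarith [mul_le_mul_of_nonneg_left hks hδρ.le]
  -- final: apply the Hausdorff covering bound
  set C : ℝ≥0∞ := ENNReal.ofReal ((2*M*Real.sqrt n + 5)^(n-1) * (4*Real.sqrt n)^n * δ) with hC
  refine le_trans (Measure.hausdorffMeasure_le_liminf_tsum (n:ℝ) (g '' K)
    (l := 𝓝[>] (0:ℝ)) (fun ρ => ENNReal.ofReal (4*δ*ρ*Real.sqrt n)) ?_ t ?_ ?_) ?_
  · have h0 : Tendsto (fun ρ : ℝ => 4*δ*ρ*Real.sqrt n) (𝓝[>] 0) (𝓝 0) := by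
      have hcont : Continuous (fun ρ : ℝ => 4*δ*ρ*Real.sqrt n) :=
        (continuous_const.mul continuous_id').mul continuous_const
      have h1 := hcont.tendsto 0
      simp only [mul_zero, zero_mul] at h1
      exact h1.mono_left nhdsWithin_le_nhds
    have h2 := (ENNReal.continuous_ofReal.tendsto 0).comp h0
    simpa [Function.comp_def] using h2
  · exact eventually_mem_nhdsWithin.mono (fun ρ hρ => hdiam ρ hρ)
  · exact eventually_mem_nhdsWithin.mono (fun ρ hρ => hcover ρ hρ)
  · -- liminf of the sums is at most `C * volume U`
    apply Filter.liminf_le_of_frequently_le'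
    apply Filter.Eventually.frequently
    have hρmax : (0:ℝ) < r / (Real.sqrt n + 1) := by positivity
    filter_upwards [Ioo_mem_nhdsGT_of_mem (Set.mem_Ico.2 ⟨le_refl (0:ℝ), hρmax⟩)] with ρ hρmem
    obtain ⟨hρ0, hρr⟩ := hρmem
    have hρn : ρ * Real.sqrt n ≤ r := by
      have h1 : ρ * (Real.sqrt n + 1) < r := (lt_div_iff₀ (by positivity)).1 hρr
      nlinarith
    set Jf : Finset (Fin n → ℤ) := (Fintype.piFinset fun _ : Fin n =>
      Finset.Icc (⌈-(R/ρ)⌉ - 1) ⌊R/ρ⌋).filter (fun z => (gridCube n ρ z ∩ K).Nonempty) with hJf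
    set Wf : Finset (Fin k → ℤ) := Fintype.piFinset fun _ : Fin k =>
      Finset.Icc (-(N:ℤ)) (N:ℤ) with hWf
    have hzero : ∀ p ∉ Jf ×ˢ Wf, EMetric.diam (t ρ p) ^ (n:ℝ) = 0 := by
      intro p hp
      by_cases hc : (gridCube n ρ p.1 ∩ K).Nonempty ∧ (∀ i, |p.2 i| ≤ (N:ℤ))
      · exfalso
        apply hp
        rw [Finset.mem_product]
        constructor
        · rw [hJf, Finset.mem_filter]
          refine ⟨?_, hc.1⟩
          rw [Fintype.mem_piFinset]
          intro i
          obtain ⟨x, hxg, hxK⟩ := hc.1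
          have hxR : ‖x‖ ≤ R := by
            have h := hR hxK
            rwa [Metric.mem_closedBall, dist_zero_right] at h
          have hxi : |x i| ≤ R := le_trans (euclid_coord_abs x i) hxR
          have h1 := (hxg i).1
          have h2 := (hxg i).2
          rw [abs_le] at hxi
          rw [Finset.mem_Icc]
          constructor
          · have h4 : -R < ((p.1 i : ℝ) + 1) * ρ := by nlinarith [hxi.1, h2]
            have h3 : -(R/ρ) ≤ ((p.1 i : ℝ) + 1) := le_of_lt (by
              rw [← neg_div]
              exact (div_lt_iff₀ hρ0).2 h4)
            have h5 : ⌈-(R/ρ)⌉ ≤ p.1 i + 1 := Int.ceil_le.2 (by push_cast; exact h3)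
            omega
          · apply Int.le_floor.2
            rw [le_div_iff₀ hρ0]
            calc (p.1 i : ℝ) * ρ = ρ * (p.1 i) := by ring
              _ ≤ x i := h1
              _ ≤ R := by linarith [hxi.2]
        · rw [hWf, Fintype.mem_piFinset]
          intro i
          rw [Finset.mem_Icc, ← abs_le]
          exact hc.2 i
      · simp only [ht, if_neg hc, EMetric.diam, EMetric.diam_empty]
        exact ENNReal.zero_rpow_of_pos (by exact_mod_cast hn)
    rw [tsum_eq_sum (f := fun p => Metric.ediam (t ρ p) ^ (n:ℝ)) hzero]
    set D : ℝ≥0∞ := ENNReal.ofReal (4*δ*ρ*Real.sqrt n) ^ n with hD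
    have hterm : ∀ p ∈ Jf ×ˢ Wf, EMetric.diam (t ρ p) ^ (n:ℝ) ≤ D := by
      intro p _
      rw [hD, ← ENNReal.rpow_natCast (ENNReal.ofReal (4*δ*ρ*Real.sqrt n)) n]
      exact ENNReal.rpow_le_rpow (hdiam ρ hρ0 p) (by positivity)
    have hsum1 : ∑ p ∈ Jf ×ˢ Wf, EMetric.diam (t ρ p) ^ (n:ℝ) ≤ (Jf ×ˢ Wf).card • D :=
      Finset.sum_le_card_nsmul _ _ _ hterm
    have hJvol : (Jf.card : ℝ≥0∞) * ENNReal.ofReal ρ ^ n ≤ volume U := by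
      have hsub : ∀ z ∈ Jf, gridCube n ρ z ⊆ U := by
        intro z hz
        rw [hJf, Finset.mem_filter] at hz
        obtain ⟨xw, hxwg, hxwK⟩ := hz.2
        intro x' hx'
        apply hrU
        apply Metric.mem_cthickening_of_dist_le x' xw r K hxwK
        calc dist x' xw = ‖x' - xw‖ := dist_eq_norm _ _
          _ ≤ ρ * Real.sqrt n := gridCube_norm_sub hρ0 hx' hxwg
          _ ≤ r := hρn
      calc (Jf.card : ℝ≥0∞) * ENNReal.ofReal ρ ^ n
          = ∑ _z ∈ Jf, (ENNReal.ofReal ρ) ^ n := by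
            rw [Finset.sum_const, nsmul_eq_mul]
        _ = ∑ z ∈ Jf, volume (gridCube n ρ z) :=
            (Finset.sum_congr rfl (fun z _ => (gridCube_volume hρ0 z).symm))
        _ = volume (⋃ z ∈ Jf, gridCube n ρ z) := (measure_biUnion_finset
            (fun a _ b _ hab => gridCube_disjoint hρ0 hab)
            (fun z _ => gridCube_measurable ρ z)).symm
        _ ≤ volume U := measure_mono (Set.iUnion₂_subset hsub)
    have hkn1 : k ≤ n - 1 := by omega
    have hN1 : (1:ℝ) ≤ (2*M*Real.sqrt n + 5)/δ := by
      rw [le_div_iff₀ hδ0]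
      nlinarith
    have hNle : ((2*N+1 : ℕ) : ℝ) ≤ (2*M*Real.sqrt n + 5)/δ := by
      have hceil : (⌈M * Real.sqrt n / δ⌉₊ : ℝ) < M * Real.sqrt n / δ + 1 :=
        Nat.ceil_lt_add_one (by positivity)
      have hmul : (⌈M * Real.sqrt n / δ⌉₊ : ℝ) * δ < M * Real.sqrt n + δ := by
        have := mul_lt_mul_of_pos_right hceil hδ0
        rwa [add_mul, div_mul_cancel₀ _ hδ0.ne', one_mul] at this
      rw [le_div_iff₀ hδ0, hN]
      push_cast
      nlinarith
    have hWcf : Wf.card = (2*N+1)^k := by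
      rw [hWf, Fintype.card_piFinset]
      have hcard : (Finset.Icc (-(N:ℤ)) (N:ℤ)).card = 2*N+1 := by
        rw [Int.card_Icc]
        omega
      simp [hcard]
    have hWcard : (Wf.card : ℝ≥0∞) ≤ ENNReal.ofReal (((2*M*Real.sqrt n + 5)/δ)^(n-1)) := by
      rw [hWcf, ← ENNReal.ofReal_natCast]
      apply ENNReal.ofReal_le_ofReal
      rw [Nat.cast_pow]
      exact le_trans (pow_le_pow_left₀ (by positivity) hNle k) (pow_le_pow_right₀ hN1 hkn1)
    have hDeq : D = ENNReal.ofReal ρ ^ n * ENNReal.ofReal ((4*δ*Real.sqrt n)^n) := by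
      have h1 : 4*δ*ρ*Real.sqrt n = ρ * (4*δ*Real.sqrt n) := by ring
      rw [hD, h1, ENNReal.ofReal_mul hρ0.le, mul_pow, ENNReal.ofReal_pow (by positivity)]
    have hreal : ((2*M*Real.sqrt n + 5)/δ)^(n-1) * (4*δ*Real.sqrt n)^n
        = (2*M*Real.sqrt n + 5)^(n-1) * (4*Real.sqrt n)^n * δ := by
      have h1 : (4*δ*Real.sqrt n)^n = (4*Real.sqrt n)^n * δ^n := by
        rw [← mul_pow]
        ring_nf
      have h2 : δ ^ n = δ^(n-1) * δ := by
        conv_lhs => rw [← Nat.succ_pred_eq_of_pos hn]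
        rw [pow_succ]
        rfl
      rw [h1, div_pow, h2]
      have h3 : δ^(n-1) ≠ 0 := pow_ne_zero _ hδ0.ne'
      field_simp
    calc ∑ p ∈ Jf ×ˢ Wf, EMetric.diam (t ρ p) ^ (n:ℝ)
        ≤ (Jf ×ˢ Wf).card • D := hsum1
      _ = ((Jf.card : ℝ≥0∞) * ENNReal.ofReal ρ ^ n)
          * ((Wf.card : ℝ≥0∞) * ENNReal.ofReal ((4*δ*Real.sqrt n)^n)) := by
          rw [Finset.card_product, nsmul_eq_mul, hDeq]
          push_cast
          ring
      _ ≤ volume U * (ENNReal.ofReal (((2*M*Real.sqrt n + 5)/δ)^(n-1))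
          * ENNReal.ofReal ((4*δ*Real.sqrt n)^n)) :=
          mul_le_mul' hJvol (mul_le_mul' hWcard le_rfl)
      _ = C * volume U := by
          rw [← ENNReal.ofReal_mul (by positivity), hreal, hC, mul_comm]

lemma core_compact {n m : ℕ} (hn : 0 < n)
    (g : EuclideanSpace ℝ (Fin n) → EuclideanSpace ℝ (Fin m))
    (A : EuclideanSpace ℝ (Fin n) →L[ℝ] EuclideanSpace ℝ (Fin m))
    (hA : ¬Function.Injective A) {M : ℝ} (hAM : ‖A‖ ≤ M)
    {δ : ℝ} (hδ0 : 0 < δ) (hδ1 : δ ≤ 1)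
    {K : Set (EuclideanSpace ℝ (Fin n))} (hK : IsCompact K)
    (happ : ∀ x ∈ K, ∀ y ∈ K, ‖g x - g y - A (x - y)‖ ≤ δ * ‖x - y‖) :
    μH[(n:ℝ)] (g '' K)
      ≤ ENNReal.ofReal ((2*M*Real.sqrt n + 5)^(n-1) * (4*Real.sqrt n)^n * δ) * volume K := by
  rcases K.eq_empty_or_nonempty with hKe | hKne
  · simp [hKe]
  set C : ℝ≥0∞ := ENNReal.ofReal ((2*M*Real.sqrt n + 5)^(n-1) * (4*Real.sqrt n)^n * δ) with hC
  have hCtop : C ≠ ∞ := ENNReal.ofReal_ne_top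
  have hvK : volume K ≠ ∞ := hK.measure_lt_top.ne
  apply ENNReal.le_of_forall_pos_le_add
  intro ε hε _
  set η : ℝ≥0∞ := (ε : ℝ≥0∞) / (C + 1) with hη
  have hη0 : η ≠ 0 := by
    apply ENNReal.div_ne_zero.2
    exact ⟨by exact_mod_cast hε.ne', by simp [hCtop]⟩
  obtain ⟨U, hKU, hUopen, hUlt⟩ := Set.exists_isOpen_lt_of_lt K (volume K + η)
    (ENNReal.lt_add_right hvK hη0)
  calc μH[(n:ℝ)] (g '' K) ≤ C * volume U :=
        core_open hn g A hA hAM hδ0 hδ1 hK hKne happ hUopen hKU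
    _ ≤ C * (volume K + η) := mul_le_mul_right hUlt.le C
    _ = C * volume K + C * η := mul_add _ _ _
    _ ≤ C * volume K + ε := by
        gcongr
        calc C * η ≤ (C + 1) * η := by gcongr; exact le_self_add
          _ = (ε : ℝ≥0∞) := ENNReal.mul_div_cancel' (by simp) (by simp [hCtop])

lemma core_meas {n m : ℕ} (hn : 0 < n) {L' : ℝ≥0}
    (g : EuclideanSpace ℝ (Fin n) → EuclideanSpace ℝ (Fin m)) (hg : LipschitzWith L' g)
    {c : ℝ≥0} (hc : (μH[(n:ℝ)] : Measure (EuclideanSpace ℝ (Fin n))) = c • volume)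
    (A : EuclideanSpace ℝ (Fin n) →L[ℝ] EuclideanSpace ℝ (Fin m))
    (hA : ¬Function.Injective A) {M : ℝ} (hAM : ‖A‖ ≤ M)
    {δ : ℝ} (hδ0 : 0 < δ) (hδ1 : δ ≤ 1)
    {X : Set (EuclideanSpace ℝ (Fin n))} (hX : MeasurableSet X) (hXfin : volume X ≠ ∞)
    (happ : ∀ x ∈ X, ∀ y ∈ X, ‖g x - g y - A (x - y)‖ ≤ δ * ‖x - y‖) :
    μH[(n:ℝ)] (g '' X)
      ≤ ENNReal.ofReal ((2*M*Real.sqrt n + 5)^(n-1) * (4*Real.sqrt n)^n * δ) * volume X := by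
  set C : ℝ≥0∞ := ENNReal.ofReal ((2*M*Real.sqrt n + 5)^(n-1) * (4*Real.sqrt n)^n * δ) with hC
  set Lc : ℝ≥0∞ := (L' : ℝ≥0∞) ^ (n:ℝ) * c with hLc
  have hLctop : Lc ≠ ∞ := by
    apply ENNReal.mul_ne_top _ ENNReal.coe_ne_top
    exact (ENNReal.rpow_lt_top_of_nonneg (by positivity) ENNReal.coe_ne_top).ne
  apply ENNReal.le_of_forall_pos_le_add
  intro ε hε _
  set η : ℝ≥0∞ := (ε : ℝ≥0∞) / (Lc + 1) with hη
  have hη0 : η ≠ 0 := by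
    apply ENNReal.div_ne_zero.2
    exact ⟨by exact_mod_cast hε.ne', by simp [hLctop]⟩
  obtain ⟨K, hKX, hKcp, hKlt⟩ := hX.exists_isCompact_lt_add hXfin hη0
  have hdiff : volume (X \ K) < η := measure_diff_lt_of_lt_add hKcp.measurableSet.nullMeasurableSet hKX
    (ne_top_of_le_ne_top hXfin (measure_mono hKX)) hKlt
  have himg : g '' X ⊆ g '' K ∪ g '' (X \ K) := by
    rw [← Set.image_union]
    exact Set.image_mono (by rw [Set.union_diff_cancel hKX])
  calc μH[(n:ℝ)] (g '' X) ≤ μH[(n:ℝ)] (g '' K) + μH[(n:ℝ)] (g '' (X \ K)) :=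
        le_trans (measure_mono himg) (measure_union_le _ _)
    _ ≤ C * volume K + Lc * volume (X \ K) := by
        apply add_le_add
        · exact core_compact hn g A hA hAM hδ0 hδ1 hKcp
            (fun x hx y hy => happ x (hKX hx) y (hKX hy))
        · have := image_hausdorff_le hg hc (X \ K)
          calc μH[(n:ℝ)] (g '' (X \ K)) ≤ (L' : ℝ≥0∞) ^ (n:ℝ) * ((c : ℝ≥0∞) * volume (X \ K)) := this
            _ = Lc * volume (X \ K) := by rw [hLc, mul_assoc]
    _ ≤ C * volume X + Lc * η :=
        add_le_add (mul_le_mul_right (measure_mono hKX) C) (mul_le_mul_right hdiff.le Lc)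
    _ ≤ C * volume X + ε := by
        gcongr
        calc Lc * η ≤ (Lc + 1) * η := by gcongr; exact le_self_add
          _ = (ε : ℝ≥0∞) := ENNReal.mul_div_cancel' (by simp) (by simp [hLctop])

lemma unitCube_subset_ball {n : ℕ} : unitCube n ⊆ Metric.closedBall 0 (Real.sqrt n) := by
  intro x hx
  rw [Metric.mem_closedBall, dist_zero_right]
  have h := euclid_norm_le zero_le_one (fun i => abs_le.2 ⟨by linarith [(hx i).1], (hx i).2⟩)
  simpa using h

lemma unitCube_volume_ne_top {n : ℕ} : volume (unitCube n) ≠ ∞ :=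
  ((measure_mono unitCube_subset_ball).trans_lt
    (isCompact_closedBall 0 (Real.sqrt n)).measure_lt_top).ne

lemma unitCube_measurable {n : ℕ} : MeasurableSet (unitCube n) := by
  have h : unitCube n = ⋂ i, (fun x : EuclideanSpace ℝ (Fin n) => x i) ⁻¹' Set.Icc 0 1 := by
    ext x; simp [unitCube]
  rw [h]
  exact MeasurableSet.iInter fun i => measurableSet_Icc.preimage
    ((continuous_apply i).measurable.comp (MeasurableEquiv.toLp 2 (Fin n → ℝ)).symm.measurable)

lemma image_noninj_null {n m : ℕ} (hn : 0 < n) {L' : ℝ≥0}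
    (g : EuclideanSpace ℝ (Fin n) → EuclideanSpace ℝ (Fin m)) (hg : LipschitzWith L' g)
    {c : ℝ≥0} (hc : (μH[(n:ℝ)] : Measure (EuclideanSpace ℝ (Fin n))) = c • volume) :
    μH[(n:ℝ)] (g '' (unitCube n ∩ ({x | DifferentiableAt ℝ g x} ∩
      (fderiv ℝ g ⁻¹' {A | Function.Injective ⇑A}ᶜ)))) = 0 := by
  set B := unitCube n ∩ ({x | DifferentiableAt ℝ g x} ∩
      (fderiv ℝ g ⁻¹' {A | Function.Injective ⇑A}ᶜ)) with hB
  have hBmeas : MeasurableSet B :=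
    unitCube_measurable.inter ((measurableSet_of_differentiableAt ℝ g).inter
      ((ContinuousLinearMap.isOpen_injective.measurableSet.compl).preimage (measurable_fderiv ℝ g)))
  have hBcube : B ⊆ unitCube n := Set.inter_subset_left
  rcases Set.eq_empty_or_nonempty B with hBe | hBne
  · simp [hBe]
  set c0 : ℝ := (2*(L':ℝ)*Real.sqrt n + 5)^(n-1) * (4*Real.sqrt n)^n with hc0
  have hc00 : 0 ≤ c0 := by positivity
  have key : ∀ j : ℕ, μH[(n:ℝ)] (g '' B) ≤
      ENNReal.ofReal (c0 * (1/(j+1))) * volume (unitCube n) := by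
    intro j
    set δ : ℝ≥0 := (1 : ℝ≥0)/(j+1) with hδ
    have hδ0 : (0:ℝ) < δ := by
      rw [hδ]
      positivity
    have hδ1 : (δ:ℝ) ≤ 1 := by
      rw [hδ]
      rw [NNReal.coe_div]
      push_cast
      rw [div_le_one (by positivity)]
      linarith
    obtain ⟨t, A, tdisj, tmeas, tcover, tapprox, tA⟩ :=
      exists_partition_approximatesLinearOn_of_hasFDerivWithinAt g B (fderiv ℝ g)
        (fun x hx => hx.2.1.hasFDerivAt.hasFDerivWithinAt) (fun _ => δ)
        (fun _ => by positivity)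
    have hAnoninj : ∀ i, ¬Function.Injective ⇑(A i) := by
      intro i
      obtain ⟨y, hyB, hAy⟩ := tA hBne i
      rw [hAy]
      exact hyB.2.2
    have hAM : ∀ i, ‖A i‖ ≤ (L' : ℝ) := by
      intro i
      obtain ⟨y, _, hAy⟩ := tA hBne i
      rw [hAy]
      exact norm_fderiv_le_of_lipschitz ℝ hg
    have himg : g '' B ⊆ ⋃ i, g '' (B ∩ t i) := by
      rw [← Set.image_iUnion, ← Set.inter_iUnion]
      exact Set.image_mono (Set.subset_inter (le_refl _) tcover)
    calc μH[(n:ℝ)] (g '' B) ≤ ∑' i, μH[(n:ℝ)] (g '' (B ∩ t i)) :=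
          le_trans (measure_mono himg) (measure_iUnion_le _)
      _ ≤ ∑' i, ENNReal.ofReal (c0 * (1/(j+1))) * volume (B ∩ t i) := by
          apply ENNReal.tsum_le_tsum
          intro i
          have hXfin : volume (B ∩ t i) ≠ ∞ :=
            ne_top_of_le_ne_top unitCube_volume_ne_top
              (measure_mono (Set.inter_subset_left.trans hBcube))
          have happ : ∀ x ∈ B ∩ t i, ∀ y ∈ B ∩ t i,
              ‖g x - g y - (A i) (x - y)‖ ≤ (δ:ℝ) * ‖x - y‖ := fun x hx y hy =>
            tapprox i x hx y hy
          have hcm := core_meas hn g hg hc (A i) (hAnoninj i) (hAM i) hδ0 hδ1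
            (hBmeas.inter (tmeas i)) hXfin happ
          have hδeq : (δ:ℝ) = 1/((j:ℝ)+1) := by
            rw [hδ, NNReal.coe_div]
            push_cast
            ring
          refine le_trans hcm (le_of_eq ?_)
          have harg : (2*(L':ℝ)*Real.sqrt n + 5)^(n-1) * (4*Real.sqrt n)^n * (δ:ℝ)
              = c0 * (1/((j:ℝ)+1)) := by
            rw [hc0, hδeq]
          rw [harg]
      _ = ENNReal.ofReal (c0 * (1/(j+1))) * ∑' i, volume (B ∩ t i) := ENNReal.tsum_mul_left
      _ = ENNReal.ofReal (c0 * (1/(j+1))) * volume (⋃ i, B ∩ t i) := by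
          rw [measure_iUnion
            (fun i j hij => ((tdisj hij).mono Set.inter_subset_right Set.inter_subset_right))
            (fun i => hBmeas.inter (tmeas i))]
      _ ≤ ENNReal.ofReal (c0 * (1/(j+1))) * volume (unitCube n) := by
          gcongr
          exact Set.iUnion_subset fun i => Set.inter_subset_left.trans hBcube
  have htend : Tendsto (fun j : ℕ => ENNReal.ofReal (c0 * (1/(j+1))) * volume (unitCube n))
      atTop (𝓝 0) := by
    have h1 : Tendsto (fun j : ℕ => c0 * (1/(j+1) : ℝ)) atTop (𝓝 0) := by
      have := tendsto_one_div_add_atTop_nhds_zero_nat.const_mul c0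
      simpa using this
    have h2 := (ENNReal.continuous_ofReal.tendsto 0).comp h1
    simp only [ENNReal.ofReal_zero] at h2
    have h3 := ENNReal.Tendsto.mul_const h2 (Or.inr (unitCube_volume_ne_top (n := n)))
    simpa using h3
  have hle : μH[(n:ℝ)] (g '' B) ≤ 0 := ge_of_tendsto' htend key
  exact le_antisymm hle zero_le

/-- David. If `f : [0,1]^n → ℝ^m` is Lipschitz and its image has positive
`n`-dimensional Hausdorff measure, then `f` is biLipschitz on a subset of the cube of
positive `n`-dimensional Hausdorff measure. -/
theorem statement0 (n m : ℕ) (hn : 0 < n) (hm : 0 < m)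
    (f : EuclideanSpace ℝ (Fin n) → EuclideanSpace ℝ (Fin m)) (L : ℝ≥0)
    (hf : LipschitzOnWith L f (unitCube n))
    (him : 0 < μH[n] (f '' unitCube n)) :
    ∃ K : Set (EuclideanSpace ℝ (Fin n)),
      K ⊆ unitCube n ∧ 0 < μH[n] K ∧ BiLipschitzOn f K := by
  classical
  obtain ⟨L', g, hg, hfg⟩ := exists_lipschitz_extension hf
  obtain ⟨c, hcpos, hc⟩ := hausdorff_eq_smul_volume n
  have himg : 0 < μH[(n:ℝ)] (g '' unitCube n) := by
    rw [← Set.EqOn.image_eq hfg]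
    exact him
  set D : Set (EuclideanSpace ℝ (Fin n)) := {x | DifferentiableAt ℝ g x} with hD
  set I : Set (EuclideanSpace ℝ (Fin n) →L[ℝ] EuclideanSpace ℝ (Fin m)) :=
    {A | Function.Injective ⇑A} with hI
  set B : Set (EuclideanSpace ℝ (Fin n)) := unitCube n ∩ (D ∩ (fderiv ℝ g ⁻¹' Iᶜ)) with hBdef
  set G : Set (EuclideanSpace ℝ (Fin n)) := unitCube n ∩ (D ∩ (fderiv ℝ g ⁻¹' I)) with hGdef
  set Nd : Set (EuclideanSpace ℝ (Fin n)) := unitCube n ∩ Dᶜ with hNdef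
  have hsplit : unitCube n ⊆ G ∪ B ∪ Nd := by
    intro x hx
    by_cases hd : DifferentiableAt ℝ g x
    · by_cases hi : Function.Injective ⇑(fderiv ℝ g x)
      · exact Or.inl (Or.inl ⟨hx, hd, hi⟩)
      · exact Or.inl (Or.inr ⟨hx, hd, hi⟩)
    · exact Or.inr ⟨hx, hd⟩
  have hNd : volume Nd = 0 := by
    have h1 : ∀ᵐ x ∂(volume : Measure (EuclideanSpace ℝ (Fin n))), DifferentiableAt ℝ g x :=
      hg.ae_differentiableAt
    exact measure_mono_null (fun x hx => hx.2) (ae_iff.1 h1)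
  have hNdim : μH[(n:ℝ)] (g '' Nd) = 0 := by
    apply le_antisymm _ zero_le
    calc μH[(n:ℝ)] (g '' Nd) ≤ (L' : ℝ≥0∞) ^ (n:ℝ) * (c * volume Nd) :=
          image_hausdorff_le hg hc Nd
      _ = 0 := by rw [hNd]; simp
  have hBim : μH[(n:ℝ)] (g '' B) = 0 := image_noninj_null hn g hg hc
  have hGpos : 0 < μH[(n:ℝ)] (g '' G) := by
    by_contra h
    have h0 : μH[(n:ℝ)] (g '' G) = 0 := by simpa using h
    have hsub : g '' unitCube n ⊆ (g '' G ∪ g '' B) ∪ g '' Nd := by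
      rw [← Set.image_union, ← Set.image_union]
      exact Set.image_mono hsplit
    have hbound : μH[(n:ℝ)] (g '' unitCube n) ≤
        μH[(n:ℝ)] (g '' G) + μH[(n:ℝ)] (g '' B) + μH[(n:ℝ)] (g '' Nd) :=
      le_trans (measure_mono hsub)
        (le_trans (measure_union_le _ _) (add_le_add_left (measure_union_le _ _) _))
    rw [h0, hBim, hNdim] at hbound
    simp at hbound
    exact absurd himg (by rw [hbound]; simp)
  -- antilipschitz data for injective maps
  have hanti : ∀ A : EuclideanSpace ℝ (Fin n) →L[ℝ] EuclideanSpace ℝ (Fin m),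
      Function.Injective ⇑A → ∃ Km : ℝ≥0, 1 ≤ Km ∧ AntilipschitzWith Km ⇑A := by
    intro A hA
    obtain ⟨Ka, _, hKa⟩ := (A : EuclideanSpace ℝ (Fin n) →ₗ[ℝ] EuclideanSpace ℝ (Fin m)).injective_iff_antilipschitz.mp
      (by rwa [ContinuousLinearMap.coe_coe])
    rw [ContinuousLinearMap.coe_coe] at hKa
    refine ⟨max Ka 1, le_max_right _ _, fun x y => le_trans (hKa x y) ?_⟩
    gcongr
    exact le_max_left _ _
  choose! Km hKm1 hKmanti using hanti
  set r : (EuclideanSpace ℝ (Fin n) →L[ℝ] EuclideanSpace ℝ (Fin m)) → ℝ≥0 :=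
    fun A => if Function.Injective ⇑A then (2 * Km A)⁻¹ else 1 with hr
  have hrpos : ∀ A, r A ≠ 0 := by
    intro A
    rw [hr]
    by_cases h : Function.Injective ⇑A
    · simp only [if_pos h]
      have h1 := hKm1 A h
      simp only [ne_eq, inv_eq_zero]
      have h2 : (0:ℝ≥0) < 2 * Km A := by positivity
      exact h2.ne'
    · simp [if_neg h]
  obtain ⟨t, A, tdisj, tmeas, tcover, tapprox, tA⟩ :=
    exists_partition_approximatesLinearOn_of_hasFDerivWithinAt g G (fderiv ℝ g)
      (fun x hx => hx.2.1.hasFDerivAt.hasFDerivWithinAt) r hrpos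
  have hGne : G.Nonempty := by
    rcases G.eq_empty_or_nonempty with h | h
    · rw [h] at hGpos
      simp at hGpos
    · exact h
  have hcov : μH[(n:ℝ)] (g '' G) ≤ ∑' i, μH[(n:ℝ)] (g '' (G ∩ t i)) := by
    have himg2 : g '' G ⊆ ⋃ i, g '' (G ∩ t i) := by
      rw [← Set.image_iUnion, ← Set.inter_iUnion]
      exact Set.image_mono (Set.subset_inter (le_refl _) tcover)
    exact le_trans (measure_mono himg2) (measure_iUnion_le _)
  have hex : ∃ i, 0 < μH[(n:ℝ)] (g '' (G ∩ t i)) := by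
    by_contra h
    push_neg at h
    have h0 : ∀ i, μH[(n:ℝ)] (g '' (G ∩ t i)) = 0 := fun i => by simpa using h i
    rw [ENNReal.tsum_eq_zero.2 h0] at hcov
    exact absurd hGpos (by simp [nonpos_iff_eq_zero.1 hcov])
  obtain ⟨i, hipos⟩ := hex
  have hKcube : G ∩ t i ⊆ unitCube n := Set.inter_subset_left.trans Set.inter_subset_left
  refine ⟨G ∩ t i, hKcube, ?_, ?_⟩
  · -- positive Hausdorff measure of the piece
    by_contra h
    have h0 : μH[(n:ℝ)] (G ∩ t i) = 0 := by simpa using h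
    have hv : volume (G ∩ t i) = 0 := by
      rw [hc] at h0
      simp only [Measure.smul_apply, smul_eq_mul] at h0
      rcases mul_eq_zero.1 h0 with h' | h'
      · exact absurd h' (ENNReal.coe_ne_zero.2 hcpos.ne')
      · exact h'
    have hb := image_hausdorff_le hg hc (G ∩ t i)
    rw [hv] at hb
    simp at hb
    exact absurd hipos (by rw [hb]; simp)
  · -- biLipschitz
    obtain ⟨y, hyG, hAy⟩ := tA hGne i
    have hinj : Function.Injective ⇑(A i) := by
      rw [hAy]
      exact hyG.2.2
    have h1K : 1 ≤ Km (A i) := hKm1 _ hinj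
    have hantiA := hKmanti _ hinj
    have happ := tapprox i
    have hrAi : r (A i) = (2 * Km (A i))⁻¹ := by rw [hr]; simp [hinj]
    rw [hrAi] at happ
    set KiR : ℝ := (Km (A i) : ℝ) with hKiR
    have hKiR1 : 1 ≤ KiR := by exact_mod_cast h1K
    have hKiR0 : 0 < KiR := lt_of_lt_of_le zero_lt_one hKiR1
    set Lb : ℝ := max (2 * KiR) (max (L':ℝ) 1) with hLb
    have hLb1 : 1 ≤ Lb := le_trans (le_max_right _ _) (le_max_right _ _)
    have hLb0 : 0 < Lb := lt_of_lt_of_le zero_lt_one hLb1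
    refine ⟨Lb, hLb1, ?_⟩
    intro x hx z hz
    have hfx : f x = g x := hfg (hKcube hx)
    have hfz : f z = g z := hfg (hKcube hz)
    have hcoe : ((2 * Km (A i))⁻¹ : ℝ≥0) = (2 * KiR)⁻¹ := by
      rw [hKiR]
      push_cast
      ring
    have happx : ‖g x - g z - (A i) (x - z)‖ ≤ (2 * KiR)⁻¹ * ‖x - z‖ := by
      have h := happ x hx z hz
      rwa [show (((2 * Km (A i))⁻¹ : ℝ≥0) : ℝ) = (2 * KiR)⁻¹ by
        rw [hKiR]; push_cast; ring] at h
    have hA1 : ‖x - z‖ ≤ KiR * ‖(A i) (x - z)‖ := by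
      have h := hantiA.le_mul_dist x z
      rwa [dist_eq_norm, dist_eq_norm, ← map_sub] at h
    constructor
    · rw [hfx, hfz, dist_eq_norm, dist_eq_norm]
      have hAn : ‖(A i) (x - z)‖ ≤ ‖g x - g z‖ + ‖g x - g z - (A i) (x - z)‖ := by
        have h5 := norm_sub_le (g x - g z) (g x - g z - (A i) (x - z))
        rwa [sub_sub_cancel] at h5
      have hlow : (2 * KiR)⁻¹ * ‖x - z‖ ≤ ‖g x - g z‖ := by
        have h2 : KiR⁻¹ * ‖x - z‖ ≤ ‖(A i) (x - z)‖ := by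
          rw [inv_mul_le_iff₀ hKiR0]
          exact hA1
        have h3 : (2 * KiR)⁻¹ = KiR⁻¹ - (2 * KiR)⁻¹ := by
          field_simp
          ring
        rw [h3, sub_mul]
        have h4 := happx
        linarith [hAn]
      calc Lb⁻¹ * ‖x - z‖ ≤ (2 * KiR)⁻¹ * ‖x - z‖ := by
            apply mul_le_mul_of_nonneg_right _ (norm_nonneg _)
            apply inv_anti₀ (by positivity)
            exact le_max_left _ _
        _ ≤ ‖g x - g z‖ := hlow
    · rw [hfx, hfz]
      calc dist (g x) (g z) ≤ (L' : ℝ) * dist x z := hg.dist_le_mul x z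
        _ ≤ Lb * dist x z := by
            apply mul_le_mul_of_nonneg_right _ dist_nonneg
            exact le_trans (le_max_left _ _) (le_max_right _ _)
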